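/- For every integer n ≥ 0, the deterministic random walk satisfies S_n(2√2) ≥ 0. -/

import Mathlib

set_option maxHeartbeats 1000000


/-- The deterministic random walk `S_n(ξ) = ∑_{j=1}^n (-1)^⌊j·ξ⌋`. -/
noncomputable def S (ξ : ℝ) (n : ℕ) : ℤ :=
  ∑ j ∈ Finset.Icc 1 n, ((Int.negOnePow ⌊(j : ℝ) * ξ⌋ : ℤˣ) : ℤ)

namespace DRW

noncomputable def t (j : ℕ) : ℤ := ((Int.negOnePow ⌊(j : ℝ) * (2 * Real.sqrt 2)⌋ : ℤˣ) : ℤ)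

noncomputable def W (n : ℕ) : ℤ := S (2 * Real.sqrt 2) n

lemma Wsucc (n : ℕ) : W (n + 1) = W n + t (n + 1) := by
  unfold W S t
  rw [Finset.sum_Icc_succ_top (by omega : 1 ≤ n + 1)]

lemma W0 : W 0 = 0 := by
  unfold W S
  simp

noncomputable def a (k : ℕ) : ℤ := round ((k : ℝ) * Real.sqrt 2)

noncomputable def e (k : ℕ) : ℝ := (k : ℝ) * Real.sqrt 2 - a k

lemma a_nonneg (k : ℕ) : 0 ≤ a k := by
  unfold a
  rw [round_eq]
  apply Int.floor_nonneg.mpr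
  have := Real.sqrt_nonneg 2
  positivity

noncomputable def K (k : ℕ) : ℕ := 3 * k + 2 * (a k).toNat

lemma K_castZ (k : ℕ) : (K k : ℤ) = 3 * k + 2 * (a k) := by
  unfold K
  push_cast [Int.toNat_of_nonneg (a_nonneg k)]
  ring

lemma irr (k : ℕ) (hk : k ≠ 0) (m : ℤ) : (k : ℝ) * Real.sqrt 2 ≠ m := by
  exact (irrational_sqrt_two.natCast_mul hk).ne_int m

lemma a_zero : a 0 = 0 := by
  unfold a
  norm_num

lemma e_zero : e 0 = 0 := by
  unfold e
  rw [a_zero]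
  norm_num

lemma K_zero : K 0 = 0 := by
  unfold K
  rw [a_zero]
  rfl

lemma e_bounds (k : ℕ) : -(1/2) < e k ∧ e k < 1/2 := by
  rcases eq_or_ne k 0 with hk | hk
  · subst hk; rw [e_zero]; norm_num
  · have h := abs_sub_round ((k : ℝ) * Real.sqrt 2)
    have he : e k = (k : ℝ) * Real.sqrt 2 - round ((k : ℝ) * Real.sqrt 2) := rfl
    rw [← he] at h
    have habs : |e k| ≠ 1/2 := by
      intro habs
      rcases abs_eq (by norm_num : (0:ℝ) ≤ 1/2) |>.mp habs with h1 | h1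
      · apply irr (2 * k) (by omega) (2 * a k + 1)
        have : (k : ℝ) * Real.sqrt 2 = a k + 1/2 := by
          have : e k = 1/2 := h1
          unfold e at this; linarith
        push_cast
        linarith
      · apply irr (2 * k) (by omega) (2 * a k - 1)
        have : (k : ℝ) * Real.sqrt 2 = a k - 1/2 := by
          have : e k = -(1/2) := h1
          unfold e at this; linarith
        push_cast
        linarith
    have : |e k| < 1/2 := lt_of_le_of_ne h habs
    constructor <;> [skip; skip] <;> cases abs_lt.mp this <;> linarith

lemma t_pos (p : ℕ) (q : ℤ) (h1 : ((2 * q : ℤ) : ℝ) ≤ (p : ℝ) * (2 * Real.sqrt 2))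
    (h2 : (p : ℝ) * (2 * Real.sqrt 2) < 2 * q + 1) : t p = 1 := by
  unfold t
  have hf : ⌊(p : ℝ) * (2 * Real.sqrt 2)⌋ = 2 * q := by
    rw [Int.floor_eq_iff]
    refine ⟨h1, ?_⟩
    push_cast
    linarith
  rw [hf, Int.negOnePow_even _ ⟨q, two_mul q⟩]
  rfl

lemma t_neg (p : ℕ) (q : ℤ) (h1 : ((2 * q + 1 : ℤ) : ℝ) ≤ (p : ℝ) * (2 * Real.sqrt 2))
    (h2 : (p : ℝ) * (2 * Real.sqrt 2) < 2 * q + 2) : t p = -1 := by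
  unfold t
  have hf : ⌊(p : ℝ) * (2 * Real.sqrt 2)⌋ = 2 * q + 1 := by
    rw [Int.floor_eq_iff]
    refine ⟨h1, ?_⟩
    push_cast
    linarith
  rw [hf, Int.negOnePow_odd _ ⟨q, rfl⟩]
  rfl

lemma block (k : ℕ) :
    t (K k + 1) = 1 ∧ t (K k + 2) = -1 ∧ t (K k + 3) = 1 ∧ t (K k + 4) = -1 ∧
    ((K (k+1) = K k + 5 ∧ t (K k + 5) = 1 ∧ t (k+1) = 1) ∨
     (K (k+1) = K k + 5 ∧ t (K k + 5) = -1 ∧ t (k+1) = -1) ∨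
     (K (k+1) = K k + 7 ∧ t (K k + 5) = 1 ∧ t (K k + 6) = -1 ∧ t (K k + 7) = -1 ∧
       t (k+1) = -1)) := by
  have hsq : Real.sqrt 2 ^ 2 = 2 := Real.sq_sqrt (by norm_num)
  set α := Real.sqrt 2 with hα
  have hα1 : 1.4 < α := by nlinarith [Real.sqrt_nonneg 2]
  have hα2 : α < 1.4143 := by nlinarith [Real.sqrt_nonneg 2]
  obtain ⟨he1, he2⟩ := e_bounds k
  set E := e k with hE
  set r := a k with hr
  have hx : (k : ℝ) * α = (r : ℝ) + E := by
    rw [hE]; unfold e; push_cast; ring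
  have key : ∀ j : ℕ, ((K k + j : ℕ) : ℝ) * (2 * α) =
      2 * (3 * (r : ℝ) + 4 * k) + (6 * E - 4 * (α * E)) + 2 * j * α := by
    intro j
    have hK : ((K k : ℕ) : ℝ) = 3 * (k : ℝ) + 2 * (r : ℝ) := by
      have h := K_castZ k
      rw [← hr] at h
      exact_mod_cast h
    push_cast [hK]
    linear_combination (6 - 4 * α) * hx + 4 * (k : ℝ) * hsq
  have keyk : ((k + 1 : ℕ) : ℝ) * (2 * α) = 2 * (r : ℝ) + 2 * E + 2 * α := by
    push_cast
    linear_combination 2 * hx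
  have h3 : (0:ℝ) < 3 - 2 * α := by linarith
  have hd1 : α - 3/2 < 3 * E - 2 * (α * E) := by
    nlinarith [mul_pos h3 (by linarith : (0:ℝ) < E + 1/2)]
  have hd2 : 3 * E - 2 * (α * E) < 3/2 - α := by
    nlinarith [mul_pos h3 (by linarith : (0:ℝ) < 1/2 - E)]
  refine ⟨?_, ?_, ?_, ?_, ?_⟩
  · exact t_pos _ (3 * r + 4 * k + 1) (by rw [key 1]; push_cast; linarith)
      (by rw [key 1]; push_cast; linarith)
  · exact t_neg _ (3 * r + 4 * k + 2) (by rw [key 2]; push_cast; linarith)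
      (by rw [key 2]; push_cast; linarith)
  · exact t_pos _ (3 * r + 4 * k + 4) (by rw [key 3]; push_cast; linarith)
      (by rw [key 3]; push_cast; linarith)
  · exact t_neg _ (3 * r + 4 * k + 5) (by rw [key 4]; push_cast; linarith)
      (by rw [key 4]; push_cast; linarith)
  -- trichotomy
  have hne1 : E ≠ 1 - α := by
    intro h
    apply irr (k + 1) (by omega) (r + 1)
    push_cast
    rw [← hα]
    linarith [hx]
  have hne2 : E ≠ 3/2 - α := by
    intro h
    apply irr (2 * (k + 1)) (by omega) (2 * r + 3)
    push_cast
    rw [← hα]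
    nlinarith [hx]
  -- round of (k+1)α
  have hxk1 : ((k + 1 : ℕ) : ℝ) * α = (r : ℝ) + E + α := by
    push_cast; linear_combination hx
  rcases lt_trichotomy E (1 - α) with hA | hA | hA
  · -- short negative block
    have ha' : a (k + 1) = r + 1 := by
      unfold a
      rw [round_eq, Int.floor_eq_iff]
      rw [hxk1]
      push_cast
      constructor <;> linarith
    have hK5 : K (k + 1) = K k + 5 := by
      have hz : (K (k+1) : ℤ) = (K k : ℤ) + 5 := by
        rw [K_castZ, K_castZ, ha', ← hr]
        push_cast
        ring
      omega
    refine Or.inr (Or.inl ⟨hK5, ?_, ?_⟩)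
    · -- t (K k + 5) = -1 : need 3E-2αE < 7-5α
      have hdA : 3 * E - 2 * (α * E) < 7 - 5 * α := by
        nlinarith [mul_pos h3 (by linarith : (0:ℝ) < (1 - α) - E)]
      exact t_neg _ (3 * r + 4 * k + 6) (by rw [key 5]; push_cast; linarith)
        (by rw [key 5]; push_cast; linarith)
    · exact t_neg _ r (by rw [keyk]; push_cast; linarith)
        (by rw [keyk]; push_cast; linarith)
  · exact absurd hA hne1
  · rcases lt_trichotomy E (3/2 - α) with hB | hB | hB
    · -- short positive block
      have ha' : a (k + 1) = r + 1 := by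
        unfold a
        rw [round_eq, Int.floor_eq_iff]
        rw [hxk1]
        push_cast
        constructor <;> linarith
      have hK5 : K (k + 1) = K k + 5 := by
        have hz : (K (k+1) : ℤ) = (K k : ℤ) + 5 := by
          rw [K_castZ, K_castZ, ha', ← hr]
          push_cast
          ring
        omega
      refine Or.inl ⟨hK5, ?_, ?_⟩
      · have hdA : 7 - 5 * α < 3 * E - 2 * (α * E) := by
          nlinarith [mul_pos h3 (by linarith : (0:ℝ) < E - (1 - α))]
        exact t_pos _ (3 * r + 4 * k + 7) (by rw [key 5]; push_cast; linarith)
          (by rw [key 5]; push_cast; linarith)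
      · exact t_pos _ (r + 1) (by rw [keyk]; push_cast; linarith)
          (by rw [keyk]; push_cast; linarith)
    · exact absurd hB hne2
    · -- long block
      have ha' : a (k + 1) = r + 2 := by
        unfold a
        rw [round_eq, Int.floor_eq_iff]
        rw [hxk1]
        push_cast
        constructor <;> linarith
      have hK7 : K (k + 1) = K k + 7 := by
        have hz : (K (k+1) : ℤ) = (K k : ℤ) + 7 := by
          rw [K_castZ, K_castZ, ha', ← hr]
          push_cast
          ring
        omega
      have hdB : 17/2 - 6 * α < 3 * E - 2 * (α * E) := by
        nlinarith [mul_pos h3 (by linarith : (0:ℝ) < E - (3/2 - α))]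
      have hdA : 7 - 5 * α < 3 * E - 2 * (α * E) := by
        nlinarith [mul_pos h3 (by linarith : (0:ℝ) < E - (1 - α))]
      refine Or.inr (Or.inr ⟨hK7, ?_, ?_, ?_, ?_⟩)
      · exact t_pos _ (3 * r + 4 * k + 7) (by rw [key 5]; push_cast; linarith)
          (by rw [key 5]; push_cast; linarith)
      · exact t_neg _ (3 * r + 4 * k + 8) (by rw [key 6]; push_cast; linarith)
          (by rw [key 6]; push_cast; linarith)
      · exact t_neg _ (3 * r + 4 * k + 9) (by rw [key 7]; push_cast; linarith)
          (by rw [key 7]; push_cast; linarith)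
      · exact t_neg _ (r + 1) (by rw [keyk]; push_cast; linarith)
          (by rw [keyk]; push_cast; linarith)

lemma Eexp (k : ℕ) : ∀ m : ℕ, W (K k + (m + 1)) = W (K k + m) + t (K k + (m + 1)) := by
  intro m
  have := Wsucc (K k + m)
  rwa [show K k + m + 1 = K k + (m + 1) by omega] at this

lemma W_K (k : ℕ) : W (K k) = W k := by
  induction k with
  | zero => rw [K_zero]
  | succ k ih =>
    obtain ⟨h1, h2, h3, h4, hc⟩ := block k
    have e1 := Eexp k 0
    have e2 := Eexp k 1
    have e3 := Eexp k 2
    have e4 := Eexp k 3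
    have e5 := Eexp k 4
    have e6 := Eexp k 5
    have e7 := Eexp k 6
    norm_num at e1 e2 e3 e4 e5 e6 e7
    rw [Wsucc k]
    rcases hc with ⟨hK, h5, h6⟩ | ⟨hK, h5, h6⟩ | ⟨hK, h5, h6, h7, h8⟩
    · rw [hK]
      rw [e5, e4, e3, e2, e1, h1, h2, h3, h4, h5, h6, ih]
      ring
    · rw [hK]
      rw [e5, e4, e3, e2, e1, h1, h2, h3, h4, h5, h6, ih]
      ring
    · rw [hK]
      rw [e7, e6, e5, e4, e3, e2, e1, h1, h2, h3, h4, h5, h6, h7, h8, ih]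
      ring

lemma Kstep (k : ℕ) : K (k + 1) = K k + 5 ∨ K (k + 1) = K k + 7 := by
  obtain ⟨_, _, _, _, hc⟩ := block k
  rcases hc with ⟨h, _⟩ | ⟨h, _⟩ | ⟨h, _⟩ <;> omega

lemma K_ge (k : ℕ) : 5 * k ≤ K k := by
  induction k with
  | zero => omega
  | succ k ih => rcases Kstep k with h | h <;> omega

lemma exists_block (n : ℕ) (hn : 1 ≤ n) : ∃ k, K k < n ∧ n ≤ K (k + 1) := by
  induction n with
  | zero => omega
  | succ n ih =>
    rcases Nat.eq_zero_or_pos n with h0 | h0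
    · refine ⟨0, ?_, ?_⟩
      · rw [K_zero]; omega
      · have := K_ge (0 + 1)
        omega
    · obtain ⟨k, hk1, hk2⟩ := ih h0
      by_cases h : n + 1 ≤ K (k + 1)
      · exact ⟨k, by omega, h⟩
      · refine ⟨k + 1, by omega, ?_⟩
        rcases Kstep (k + 1) with hs | hs <;> omega

lemma main : ∀ n, 0 ≤ W n := by
  intro n
  induction n using Nat.strong_induction_on with
  | _ n ih =>
    rcases Nat.eq_zero_or_pos n with h0 | h0
    · rw [h0, W0]
    · obtain ⟨k, hk1, hk2⟩ := exists_block n h0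
      have hK5k := K_ge k
      have hK5k1 := K_ge (k + 1)
      have hkn : k < n := by omega
      have hWk : 0 ≤ W k := ih k hkn
      have hWKk : 0 ≤ W (K k) := by rw [W_K]; exact hWk
      obtain ⟨h1, h2, h3, h4, hc⟩ := block k
      have e1 := Eexp k 0
      have e2 := Eexp k 1
      have e3 := Eexp k 2
      have e4 := Eexp k 3
      have e5 := Eexp k 4
      have e6 := Eexp k 5
      norm_num at e1 e2 e3 e4 e5 e6
      have hend : n = K (k + 1) → 0 ≤ W n := by
        intro h
        have hk1n : k + 1 < n := by omega
        rw [h, W_K]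
        exact ih (k + 1) hk1n
      rcases hc with ⟨hK, h5, h6⟩ | ⟨hK, h5, h6⟩ | ⟨hK, h5, h6, h7, h8⟩
      · have : n = K k + 1 ∨ n = K k + 2 ∨ n = K k + 3 ∨ n = K k + 4 ∨ n = K (k + 1) := by
          omega
        rcases this with h | h | h | h | h
        · rw [h, e1, h1]; linarith
        · rw [h, e2, e1, h1, h2]; linarith
        · rw [h, e3, e2, e1, h1, h2, h3]; linarith
        · rw [h, e4, e3, e2, e1, h1, h2, h3, h4]; linarith
        · exact hend h
      · have : n = K k + 1 ∨ n = K k + 2 ∨ n = K k + 3 ∨ n = K k + 4 ∨ n = K (k + 1) := by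
          omega
        rcases this with h | h | h | h | h
        · rw [h, e1, h1]; linarith
        · rw [h, e2, e1, h1, h2]; linarith
        · rw [h, e3, e2, e1, h1, h2, h3]; linarith
        · rw [h, e4, e3, e2, e1, h1, h2, h3, h4]; linarith
        · exact hend h
      · have : n = K k + 1 ∨ n = K k + 2 ∨ n = K k + 3 ∨ n = K k + 4 ∨ n = K k + 5 ∨
            n = K k + 6 ∨ n = K (k + 1) := by omega
        rcases this with h | h | h | h | h | h | h
        · rw [h, e1, h1]; linarith
        · rw [h, e2, e1, h1, h2]; linarith
        · rw [h, e3, e2, e1, h1, h2, h3]; linarith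
        · rw [h, e4, e3, e2, e1, h1, h2, h3, h4]; linarith
        · rw [h, e5, e4, e3, e2, e1, h1, h2, h3, h4, h5]; linarith
        · rw [h, e6, e5, e4, e3, e2, e1, h1, h2, h3, h4, h5, h6]; linarith
        · exact hend h

end DRW

theorem stmt_0 (n : ℕ) : 0 ≤ S (2 * Real.sqrt 2) n := DRW.main n
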